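/- Let d ≥ 1 and let C_cl be the matrix indexed by Fin d × Fin d given by C_cl = ∑_{i ∈ Fin d} E_{ii} ⊗ E_{ii}, where E_{ii} is the matrix unit with a single 1 in position (i,i). For a real number p ≥ 0, there exists a density matrix ρ₀ on Fin d such that (ρ₀ ⊗ I_d) − p·C_cl is positive semidefinite if and only if p ≤ 1/d. (The maximum probability of simulating an ideal classical channel from the future to the past is 1/d.) -/

import Mathlib

open Matrix
open scoped Kronecker ComplexOrder

lemma psd_diag_nonneg {n : Type*} [Fintype n] [DecidableEq n]
    {M : Matrix n n ℂ} (hM : M.PosSemidef) (i : n) : 0 ≤ M i i := by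
  exact hM.diag_nonneg

/-- The maximum probability of simulating an ideal classical channel on a d-dimensional
system from the future to the past is 1/d. -/
theorem classical_channel_sim_prob (d : ℕ) (hd : 1 ≤ d) (p : ℝ) (hp : 0 ≤ p) :
    (∃ ρ₀ : Matrix (Fin d) (Fin d) ℂ, ρ₀.PosSemidef ∧ ρ₀.trace = 1 ∧
        (ρ₀ ⊗ₖ (1 : Matrix (Fin d) (Fin d) ℂ) -
          (p : ℂ) • ∑ i : Fin d,
            single i i (1 : ℂ) ⊗ₖ single i i (1 : ℂ)).PosSemidef)
      ↔ p ≤ 1 / d := by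
  have hd0 : (0:ℝ) < d := by exact_mod_cast hd
  have hdc : (d:ℂ) ≠ 0 := by exact_mod_cast hd0.ne'
  constructor
  · rintro ⟨ρ, hρ, htr, hM⟩
    have key : ∀ i : Fin d, p ≤ (ρ i i).re := by
      intro i
      have h := psd_diag_nonneg hM (i, i)
      have hval : (ρ ⊗ₖ (1 : Matrix (Fin d) (Fin d) ℂ) -
          (p : ℂ) • ∑ j : Fin d,
            single j j (1 : ℂ) ⊗ₖ single j j (1 : ℂ)) (i,i) (i,i)
          = ρ i i - (p : ℂ) := by
        simp [Matrix.sub_apply, Matrix.kronecker_apply, Matrix.smul_apply,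
          Matrix.one_apply, Matrix.sum_apply, Matrix.single, Finset.sum_ite_eq]
      rw [hval, Complex.le_def] at h
      simpa using h.1
    have hsum : (1:ℝ) = ∑ i : Fin d, (ρ i i).re := by
      have h1 : (Matrix.trace ρ).re = 1 := by rw [htr]; simp
      rw [← h1]
      simp [Matrix.trace, Matrix.diag, Complex.re_sum]
    have hdp : (d : ℝ) * p ≤ 1 := by
      rw [hsum]
      calc (d:ℝ) * p = ∑ _i : Fin d, p := by simp [mul_comm]
        _ ≤ ∑ i : Fin d, (ρ i i).re := Finset.sum_le_sum fun i _ => key i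
    rw [le_div_iff₀ hd0]
    linarith
  · intro hpd
    have hpi : p ≤ (d:ℝ)⁻¹ := by rwa [one_div] at hpd
    have hinv : (0:ℂ) ≤ ((d:ℂ))⁻¹ := by
      have : ((d:ℂ))⁻¹ = (((d:ℝ)⁻¹ : ℝ) : ℂ) := by push_cast; ring
      rw [this, Complex.zero_le_real]
      positivity
    refine ⟨Matrix.diagonal (fun _ : Fin d => ((d:ℂ))⁻¹), ?_, ?_, ?_⟩
    · exact Matrix.posSemidef_diagonal_iff.mpr fun _ => hinv
    · simp [Matrix.trace_diagonal, Finset.card_univ]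
      field_simp
    · have heq : (Matrix.diagonal (fun _ : Fin d => ((d:ℂ))⁻¹)) ⊗ₖ
            (1 : Matrix (Fin d) (Fin d) ℂ) -
          (p : ℂ) • ∑ i : Fin d,
            single i i (1 : ℂ) ⊗ₖ single i i (1 : ℂ)
          = Matrix.diagonal (fun ij : Fin d × Fin d =>
              if ij.1 = ij.2 then ((d:ℂ))⁻¹ - (p:ℂ) else ((d:ℂ))⁻¹) := by
        ext ⟨a, b⟩ ⟨c, e⟩
        simp only [Matrix.sub_apply, Matrix.kronecker_apply, Matrix.smul_apply,
          Matrix.one_apply, Matrix.sum_apply, Matrix.single, Matrix.of_apply,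
          Matrix.diagonal_apply, Prod.mk.injEq, smul_eq_mul]
        rcases eq_or_ne a c with rfl | hac
        · rcases eq_or_ne b e with rfl | hbe
          · rcases eq_or_ne a b with rfl | hab
            · simp [Finset.sum_ite_eq]
            · simp [hab, Finset.sum_ite_eq, and_comm]
              intro j
              exact absurd j.symm hab
          · simp [hbe]
            right
            refine Finset.sum_eq_zero fun x _ => ?_
            split_ifs with h1 h2 <;>
              first | rfl | exact absurd (h1.1.symm.trans h1.2) hbe
        · simp [hac, Ne.symm hac]
          right
          refine Finset.sum_eq_zero fun x _ => ?_
          split_ifs with h1 h2 <;>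
            first | rfl | exact absurd (h2.1.symm.trans h2.2) hac
      rw [heq]
      refine Matrix.posSemidef_diagonal_iff.mpr fun ij => ?_
      by_cases h : ij.1 = ij.2 <;> simp only [h, if_true, if_false]
      · have : ((d:ℂ))⁻¹ - (p:ℂ) = (((d:ℝ)⁻¹ - p : ℝ) : ℂ) := by push_cast; ring
        rw [this, Complex.zero_le_real]
        linarith
      · exact hinv
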